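/- arXiv:2509.01479 — 2 statements merged into one kernel-verified Lean document; each statement's English description precedes it below -/
import Mathlib

section
/- (Correctness of the similarity-relation encoding.) Fix AP, a set of actions Act ⊆ AP, A ⊆ Act, and three trace copies indexed by path variables π, ρ, σ. Let τ ∈ (2^{AP × {π,ρ,σ}})^ω be the combined trace of three traces t_π, t_ρ, t_σ ∈ (2^AP)^ω, i.e., τ[i] = {(p,v) | v ∈ {π,ρ,σ}, p ∈ t_v[i]}. Consider the LTL-with-past formula ◇⁻( (¬Y⊤) ∧ □[ ⋀_{p ∈ Act∖A} (p_σ ↔ p_π) ∧ ⋀_{p ∈ A} ((p_σ ↮ p_π) → (p_ρ ↮ p_π)) ] ), where p_v abbreviates the proposition (p,v). Then for every time point i: τ,i ⊨ this formula if and only if t_σ =_{Act∖A} t_π and t_σ ≤^A_{t_π} t_ρ. -/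
/-- Syntax of LTL with past over atomic propositions `Q` (with primitive truth `tt`). -/
inductive LTL (Q : Type*) where
  | tt : LTL Q
  | atom : Q → LTL Q
  | neg : LTL Q → LTL Q
  | or : LTL Q → LTL Q → LTL Q
  | next : LTL Q → LTL Q
  | prev : LTL Q → LTL Q
  | untl : LTL Q → LTL Q → LTL Q
  | since : LTL Q → LTL Q → LTL Q

namespace LTL

variable {Q : Type*}

/-- Semantics of LTL with past on a trace `τ` at time point `i`. -/
def sat : LTL Q → (ℕ → Set Q) → ℕ → Prop
  | .tt, _, _ => True
  | .atom p, τ, i => p ∈ τ i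
  | .neg φ, τ, i => ¬ sat φ τ i
  | .or φ ψ, τ, i => sat φ τ i ∨ sat ψ τ i
  | .next φ, τ, i => sat φ τ (i + 1)
  | .prev φ, τ, i => 0 < i ∧ sat φ τ (i - 1)
  | .untl φ ψ, τ, i => ∃ k, i ≤ k ∧ sat ψ τ k ∧ ∀ j, i ≤ j → j < k → sat φ τ j
  | .since φ ψ, τ, i => ∃ g, g ≤ i ∧ sat ψ τ g ∧ ∀ h, g ≤ h → h < i → sat φ τ h

/-- Derived conjunction. -/
def and (φ ψ : LTL Q) : LTL Q := .neg (.or (.neg φ) (.neg ψ))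

/-- Derived implication. -/
def impl (φ ψ : LTL Q) : LTL Q := .or (.neg φ) ψ

/-- Derived biimplication `φ ↔ ψ`. -/
def biim (φ ψ : LTL Q) : LTL Q := and (impl φ ψ) (impl ψ φ)

/-- Derived exclusive or `φ ↮ ψ`. -/
def niff (φ ψ : LTL Q) : LTL Q := .neg (biim φ ψ)

/-- Derived `Once` operator `◇⁻`. -/
def once (φ : LTL Q) : LTL Q := .since .tt φ

/-- Derived `Historically` operator `□⁻`. -/
def hist (φ : LTL Q) : LTL Q := .neg (once (.neg φ))

/-- Derived `Globally` operator `□`. -/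
def glob (φ : LTL Q) : LTL Q := .neg (.untl .tt (.neg φ))

/-- Finite conjunction. -/
def bigAnd (l : List (LTL Q)) : LTL Q := l.foldr and .tt

/-- Finite disjunction. -/
def bigOr (l : List (LTL Q)) : LTL Q := l.foldr .or (.neg .tt)

end LTL

/-- `π =_A π′` : agreement on `A` at every time point. -/
def agreeOn {AP : Type*} (A : Set AP) (π π' : ℕ → Set AP) : Prop :=
  ∀ i, π i ∩ A = π' i ∩ A

/-- `π ⊕_A π′` : trace-wide symmetric difference restricted to `A`. -/
def symDiff {AP : Type*} (A : Set AP) (π π' : ℕ → Set AP) : Set (AP × ℕ) :=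
  { q | q.1 ∈ A ∧ q.1 ∈ (π q.2 \ π' q.2) ∪ (π' q.2 \ π q.2) }

/-- `π′ ≤^A_{base} π″` : `π′` is at least as similar to `base` as `π″`, over `A`. -/
def simLE {AP : Type*} (A : Set AP) (base π' π'' : ℕ → Set AP) : Prop :=
  symDiff A π' base ⊆ symDiff A π'' base

lemma sat_and {AP : Type*} (φ ψ : LTL AP) (τ : ℕ → Set AP) (i : ℕ) :
    (LTL.and φ ψ).sat τ i ↔ φ.sat τ i ∧ ψ.sat τ i := by
  simp [LTL.and, LTL.sat]

lemma sat_bigAnd {AP : Type*} (l : List (LTL AP)) (τ : ℕ → Set AP) (i : ℕ) :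
    (LTL.bigAnd l).sat τ i ↔ ∀ φ ∈ l, φ.sat τ i := by
  induction l with
  | nil => simp [LTL.bigAnd, LTL.sat]
  | cons a l ih =>
    simp only [LTL.bigAnd, List.foldr_cons] at *
    rw [sat_and, ih]; simp

lemma sat_glob {AP : Type*} (φ : LTL AP) (τ : ℕ → Set AP) (i : ℕ) :
    (LTL.glob φ).sat τ i ↔ ∀ k, i ≤ k → φ.sat τ k := by
  simp only [LTL.glob, LTL.sat]
  push_neg
  constructor
  · intro h k hk
    by_contra hc
    obtain ⟨j, _, _, hT⟩ := h k hk hc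
    exact hT
  · intro h k hk hc
    exact absurd (h k hk) hc

lemma sat_once0 {AP : Type*} (φ : LTL AP) (τ : ℕ → Set AP) (i : ℕ) :
    (LTL.once (LTL.and (LTL.neg (LTL.prev LTL.tt)) φ)).sat τ i ↔ φ.sat τ 0 := by
  simp only [LTL.once, LTL.and, LTL.sat, not_or, not_not]
  constructor
  · rintro ⟨g, _, ⟨hg, hφ⟩, _⟩
    have : g = 0 := by
      by_contra h
      exact hg ⟨Nat.pos_of_ne_zero h, trivial⟩
    rwa [this] at hφ
  · intro h
    refine ⟨0, Nat.zero_le _, ⟨?_, h⟩, fun _ _ _ => trivial⟩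
    simp

lemma sat_bigAnd_map {AP B : Type*} (l : List B) (f : B → LTL AP) (τ : ℕ → Set AP) (i : ℕ) :
    (LTL.bigAnd (l.map f)).sat τ i ↔ ∀ p ∈ l, (f p).sat τ i := by
  rw [sat_bigAnd]; simp

/-- correctness of the similarity-relation encoding. The trace copies are
indexed by `Fin 3`, with `0 = π`, `1 = ρ`, `2 = σ`. -/
theorem similarity_encoding_correct {AP : Type} [DecidableEq AP]
    (Act A : Finset AP) (hA : A ⊆ Act)
    (t : Fin 3 → ℕ → Set AP) (i : ℕ) :
    LTL.sat
      (LTL.once (LTL.and (LTL.neg (LTL.prev LTL.tt))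
        (LTL.glob (LTL.and
          (LTL.bigAnd ((Act \ A).toList.map fun p =>
            LTL.biim (LTL.atom (p, (2 : Fin 3))) (LTL.atom (p, (0 : Fin 3)))))
          (LTL.bigAnd (A.toList.map fun p =>
            LTL.impl
              (LTL.niff (LTL.atom (p, (2 : Fin 3))) (LTL.atom (p, (0 : Fin 3))))
              (LTL.niff (LTL.atom (p, (1 : Fin 3))) (LTL.atom (p, (0 : Fin 3))))))))))
      (fun j => { q : AP × Fin 3 | q.1 ∈ t q.2 j }) i
    ↔ (agreeOn ((↑Act : Set AP) \ ↑A) (t 2) (t 0) ∧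
        simLE (↑A : Set AP) (t 0) (t 2) (t 1)) := by
  rw [sat_once0, sat_glob]
  simp only [sat_and, sat_bigAnd_map, Finset.mem_toList, Finset.mem_sdiff,
    LTL.biim, LTL.impl, LTL.niff, LTL.sat, Set.mem_setOf_eq, Nat.zero_le, true_implies,
    not_or, not_not, forall_exists_index, and_imp, forall_apply_eq_imp_iff₂, Finset.mem_coe]
  constructor
  · intro h
    refine ⟨fun k => Set.ext fun p => ?_, fun q hq => ?_⟩
    · have := (h k).1 p
      simp only [Set.mem_inter_iff, Set.mem_diff, Finset.mem_coe]
      tauto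
    · simp only [symDiff, Set.mem_setOf_eq, Set.mem_union, Set.mem_diff, Finset.mem_coe] at hq ⊢
      obtain ⟨hpA, hd⟩ := hq
      have := (h q.2).2 q.1 hpA
      exact ⟨hpA, by tauto⟩
  · rintro ⟨h1, h2⟩ k
    constructor
    · intro p hpAct hpA
      have := Set.ext_iff.mp (h1 k) p
      simp only [Set.mem_inter_iff, Set.mem_diff, Finset.mem_coe] at this
      tauto
    · intro p hpA
      have := @h2 (p, k)
      simp only [symDiff, Set.mem_setOf_eq, Set.mem_union, Set.mem_diff, Finset.mem_coe] at this
      tauto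
end

section
/- (Correctness of the system encoding θ.) Let T = (S, S₀, Δ, AP, Λ) be a transition system with a single initial state S₀ = {s₀}, and let π be a path variable. Consider traces τ over the proposition set {q_π | q ∈ AP ∪ S} and the LTL-with-past formula θ(π,T) = ◇⁻( (¬Y⊤) ∧ (s₀)_π ∧ □ ⋀_{s ∈ S} [ s_π → ( ⋀_{t ∈ S∖{s}} ¬t_π ∧ ⋁_{t ∈ Δ(s)} ( X t_π ∧ ⋀_{p ∈ Λ(s,t)} p_π ∧ ⋀_{p ∈ AP∖Λ(s,t)} ¬p_π ) ) ] ). Then for every trace τ and every time point i: τ,i ⊨ θ(π,T) if and only if there exists a path ρ of T with ρ[0] = s₀ such that for all j ∈ ℕ, {s ∈ S | s_π ∈ τ[j]} = {ρ[j]} and {p ∈ AP | p_π ∈ τ[j]} = Λ(ρ[j], ρ[j+1]); in particular, the AP-part of the π-indexed propositions of τ is then exactly a trace in Π(T). -/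
/-- A finite-state transition system with `Finset`-valued data, as used in the encoding. -/
structure FinTransSys (S AP : Type) where
  init : Finset S
  delta : S → Finset S
  delta_nonempty : ∀ s, (delta s).Nonempty
  label : S → S → Finset AP

/-- `Π(T)`: the set of traces of initial paths of a finite transition system. -/
def FinTransSys.Traces {S AP : Type} (T : FinTransSys S AP) : Set (ℕ → Set AP) :=
  { π | ∃ ρ : ℕ → S, ρ 0 ∈ T.init ∧ (∀ i, ρ (i + 1) ∈ T.delta (ρ i)) ∧
      ∀ i, π i = ↑(T.label (ρ i) (ρ (i + 1))) }

/-- The system encoding `θ(π, T)` for a single path variable `π`: propositions `q_π` for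
`q ∈ AP ∪ S` are modeled by the sum type `AP ⊕ S`. -/
noncomputable def theta {S AP : Type} [Fintype S] [Fintype AP] [DecidableEq S] [DecidableEq AP]
    (T : FinTransSys S AP) (s₀ : S) : LTL (AP ⊕ S) :=
  LTL.once (LTL.and (LTL.neg (LTL.prev LTL.tt))
    (LTL.and (LTL.atom (Sum.inr s₀))
      (LTL.glob (LTL.bigAnd ((Finset.univ : Finset S).toList.map fun s =>
        LTL.impl (LTL.atom (Sum.inr s))
          (LTL.and
            (LTL.bigAnd (((Finset.univ : Finset S) \ {s}).toList.map fun u =>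
              LTL.neg (LTL.atom (Sum.inr u))))
            (LTL.bigOr ((T.delta s).toList.map fun u =>
              LTL.and (LTL.next (LTL.atom (Sum.inr u)))
                (LTL.and
                  (LTL.bigAnd ((T.label s u).toList.map fun p =>
                    LTL.atom (Sum.inl p)))
                  (LTL.bigAnd (((T.label s u)ᶜ).toList.map fun p =>
                    LTL.neg (LTL.atom (Sum.inl p)))))))))))))

namespace LTL
variable {Q : Type*} {τ : ℕ → Set Q} {i : ℕ}

theorem sat_and {φ ψ : LTL Q} : sat (and φ ψ) τ i ↔ (sat φ τ i ∧ sat ψ τ i) := by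
  simp only [and, sat]; tauto

theorem sat_impl {φ ψ : LTL Q} : sat (impl φ ψ) τ i ↔ (sat φ τ i → sat ψ τ i) := by
  simp only [impl, sat]; tauto

theorem sat_bigAnd {l : List (LTL Q)} : sat (bigAnd l) τ i ↔ ∀ φ ∈ l, sat φ τ i := by
  induction l with
  | nil => simp [bigAnd, sat]
  | cons a l ih =>
    simp only [bigAnd, List.foldr_cons] at *
    rw [sat_and, ih]; simp

theorem sat_bigOr {l : List (LTL Q)} : sat (bigOr l) τ i ↔ ∃ φ ∈ l, sat φ τ i := by
  induction l with
  | nil => simp [bigOr, sat]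
  | cons a l ih =>
    show sat (LTL.or a (bigOr l)) τ i ↔ _
    simp only [sat, ih]
    simp

theorem sat_once {φ : LTL Q} : sat (once φ) τ i ↔ ∃ g, g ≤ i ∧ sat φ τ g := by
  simp [once, sat]

theorem sat_glob {φ : LTL Q} : sat (glob φ) τ i ↔ ∀ k, i ≤ k → sat φ τ k := by
  simp [glob, sat]

end LTL
theorem sat_theta_iff {S AP : Type} [Fintype S] [Fintype AP] [DecidableEq S] [DecidableEq AP]
    (T : FinTransSys S AP) (s₀ : S) (τ : ℕ → Set (AP ⊕ S)) (i : ℕ) :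
    LTL.sat (theta T s₀) τ i ↔
      (Sum.inr s₀ ∈ τ 0 ∧ ∀ k, ∀ s : S, Sum.inr s ∈ τ k →
        (∀ u : S, u ≠ s → Sum.inr u ∉ τ k) ∧
        ∃ u ∈ T.delta s, Sum.inr u ∈ τ (k+1) ∧
          (∀ p, p ∈ T.label s u → Sum.inl p ∈ τ k) ∧
          (∀ p, p ∉ T.label s u → Sum.inl p ∉ τ k)) := by
  rw [theta, LTL.sat_once]
  constructor
  · rintro ⟨g, -, hg⟩
    rw [LTL.sat_and, LTL.sat_and] at hg
    obtain ⟨h0, hs0, hglob⟩ := hg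
    have hg0 : g = 0 := by
      by_contra h
      exact h0 ⟨Nat.pos_of_ne_zero h, trivial⟩
    subst hg0
    refine ⟨hs0, fun k s hs => ?_⟩
    have hk := LTL.sat_glob.mp hglob k (Nat.zero_le _)
    rw [LTL.sat_bigAnd] at hk
    have hks := hk _ (List.mem_map.mpr ⟨s, Finset.mem_toList.mpr (Finset.mem_univ s), rfl⟩)
    rw [LTL.sat_impl] at hks
    replace hks := hks hs
    rw [LTL.sat_and] at hks
    obtain ⟨h1, h2⟩ := hks
    rw [LTL.sat_bigAnd] at h1
    rw [LTL.sat_bigOr] at h2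
    constructor
    · intro u hu
      have := h1 _ (List.mem_map.mpr ⟨u, Finset.mem_toList.mpr (by simp [hu]), rfl⟩)
      simpa [LTL.sat] using this
    · obtain ⟨φ, hφ, hsat⟩ := h2
      obtain ⟨u, hu, rfl⟩ := List.mem_map.mp hφ
      rw [LTL.sat_and, LTL.sat_and, LTL.sat_bigAnd, LTL.sat_bigAnd] at hsat
      obtain ⟨hnext, hpos, hneg⟩ := hsat
      refine ⟨u, Finset.mem_toList.mp hu, by simpa [LTL.sat] using hnext, ?_, ?_⟩
      · intro p hp
        simpa [LTL.sat] using hpos _ (List.mem_map.mpr ⟨p, Finset.mem_toList.mpr hp, rfl⟩)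
      · intro p hp
        simpa [LTL.sat] using
          hneg _ (List.mem_map.mpr ⟨p, Finset.mem_toList.mpr (Finset.mem_compl.mpr hp), rfl⟩)
  · rintro ⟨hs0, hC⟩
    refine ⟨0, Nat.zero_le _, ?_⟩
    rw [LTL.sat_and, LTL.sat_and]
    refine ⟨by simp [LTL.sat], hs0, ?_⟩
    rw [LTL.sat_glob]
    intro k _
    rw [LTL.sat_bigAnd]
    intro φ hφ
    obtain ⟨s, -, rfl⟩ := List.mem_map.mp hφ
    rw [LTL.sat_impl]
    intro hs
    obtain ⟨huniq, u, hu, hnext, hpos, hneg⟩ := hC k s hs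
    rw [LTL.sat_and]
    constructor
    · rw [LTL.sat_bigAnd]
      intro ψ hψ
      obtain ⟨v, hv, rfl⟩ := List.mem_map.mp hψ
      have hv' : v ≠ s := by simpa using Finset.mem_toList.mp hv
      simpa [LTL.sat] using huniq v hv'
    · rw [LTL.sat_bigOr]
      refine ⟨_, List.mem_map.mpr ⟨u, Finset.mem_toList.mpr hu, rfl⟩, ?_⟩
      rw [LTL.sat_and, LTL.sat_and, LTL.sat_bigAnd, LTL.sat_bigAnd]
      refine ⟨by simpa [LTL.sat] using hnext, ?_, ?_⟩
      · intro ψ hψ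
        obtain ⟨p, hp, rfl⟩ := List.mem_map.mp hψ
        simpa [LTL.sat] using hpos p (Finset.mem_toList.mp hp)
      · intro ψ hψ
        obtain ⟨p, hp, rfl⟩ := List.mem_map.mp hψ
        simpa [LTL.sat] using hneg p (Finset.mem_compl.mp (Finset.mem_toList.mp hp))
/-- correctness of the system encoding `θ`: a trace over the augmented
propositions satisfies `θ(π,T)` iff its state part traces an initial path of `T` and its
`AP` part is the corresponding trace; in particular the `AP` part is then a trace in `Π(T)`. -/
theorem theta_encoding_correct {S AP : Type} [Fintype S] [Fintype AP]
    [DecidableEq S] [DecidableEq AP]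
    (T : FinTransSys S AP) (s₀ : S) (hinit : T.init = {s₀})
    (τ : ℕ → Set (AP ⊕ S)) (i : ℕ) :
    (LTL.sat (theta T s₀) τ i ↔
      ∃ ρ : ℕ → S, ρ 0 = s₀ ∧ (∀ j, ρ (j + 1) ∈ T.delta (ρ j)) ∧
        ∀ j, ({ s : S | Sum.inr s ∈ τ j } = {ρ j} ∧
          { p : AP | Sum.inl p ∈ τ j } = ↑(T.label (ρ j) (ρ (j + 1))))) ∧
    (LTL.sat (theta T s₀) τ i →
      (fun j => { p : AP | Sum.inl p ∈ τ j }) ∈ T.Traces) := by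
  have hmain : LTL.sat (theta T s₀) τ i ↔
      ∃ ρ : ℕ → S, ρ 0 = s₀ ∧ (∀ j, ρ (j + 1) ∈ T.delta (ρ j)) ∧
        ∀ j, ({ s : S | Sum.inr s ∈ τ j } = {ρ j} ∧
          { p : AP | Sum.inl p ∈ τ j } = ↑(T.label (ρ j) (ρ (j + 1)))) := by
    rw [sat_theta_iff]
    constructor
    · rintro ⟨hs0, hC⟩
      choose f hf1 hf2 hf3 hf4 using fun k s h => (hC k s h).2
      let g : ∀ k : ℕ, {s : S // Sum.inr s ∈ τ k} := fun k =>
        Nat.rec ⟨s₀, hs0⟩ (fun k p => ⟨f k p.1 p.2, hf2 k p.1 p.2⟩) k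
      have hgsucc : ∀ k, (g (k+1)).1 = f k (g k).1 (g k).2 := fun k => rfl
      refine ⟨fun k => (g k).1, rfl, fun j => ?_, fun j => ⟨?_, ?_⟩⟩
      · exact hf1 j (g j).1 (g j).2
      · ext s
        simp only [Set.mem_setOf_eq, Set.mem_singleton_iff]
        constructor
        · intro hs
          by_contra hne
          exact (hC j (g j).1 (g j).2).1 s hne hs
        · rintro rfl; exact (g j).2
      · ext p
        simp only [Set.mem_setOf_eq, Finset.coe_sort_coe, Finset.mem_coe]
        constructor
        · intro hp
          by_contra hnp
          exact hf4 j (g j).1 (g j).2 p hnp hp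
        · exact hf3 j (g j).1 (g j).2 p
    · rintro ⟨ρ, h0, hδ, hset⟩
      have hmem : ∀ j, Sum.inr (ρ j) ∈ τ j := fun j => by
        have : ρ j ∈ ({s : S | Sum.inr s ∈ τ j}) := by
          rw [(hset j).1]; exact rfl
        exact this
      refine ⟨h0 ▸ hmem 0, fun k s hs => ?_⟩
      have hsρ : s = ρ k := by
        have : s ∈ ({ρ k} : Set S) := (hset k).1 ▸ hs
        exact this
      subst hsρ
      refine ⟨fun u hu humem => hu ?_, ρ (k+1), hδ k, hmem (k+1), ?_, ?_⟩
      · have : u ∈ ({s : S | Sum.inr s ∈ τ k}) := humem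
        rw [(hset k).1] at this
        exact this
      · intro p hp
        have : p ∈ ({p : AP | Sum.inl p ∈ τ k}) := by
          rw [(hset k).2]; exact_mod_cast hp
        exact this
      · intro p hp hmem'
        have : p ∈ ({p : AP | Sum.inl p ∈ τ k}) := hmem'
        rw [(hset k).2] at this
        exact hp (by exact_mod_cast this)
  refine ⟨hmain, fun hsat => ?_⟩
  obtain ⟨ρ, h0, hδ, hset⟩ := hmain.mp hsat
  exact ⟨ρ, by rw [hinit, h0]; exact Finset.mem_singleton_self s₀, hδ, fun j => (hset j).2⟩
end
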